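/- Let T be a unitrivalent tree that is not simple. Then there exist a maximal-length path P of T and trivalent vertices v0 and v1 of T such that v0 lies on P, v1 does not lie on P, and v0 is adjacent to v1 (so v1 is at distance 1 from a trivalent vertex contained in a maximal-length chain of edges not containing v1). -/
import Mathlib


open scoped Classical

/-- A unitrivalent tree: a finite tree (connected acyclic simple graph) with at least
two vertices in which every vertex has degree 1 or 3. -/
def IsUnitrivalentTree {V : Type*} [Fintype V] (G : SimpleGraph V) : Prop :=
  G.IsTree ∧ 2 ≤ Fintype.card V ∧ ∀ v : V, G.degree v = 1 ∨ G.degree v = 3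

/-- A unitrivalent tree is simple if it contains a path passing through all of its
trivalent vertices. -/
def IsSimpleUnitrivalent {V : Type*} [Fintype V] (G : SimpleGraph V) : Prop :=
  ∃ (u v : V) (p : G.Walk u v), p.IsPath ∧ ∀ w : V, G.degree w = 3 → w ∈ p.support

/-- If a vertex has two distinct neighbors and has degree 1 or 3, it has degree 3. -/
lemma deg3_of_two_nbrs {V : Type*} [Fintype V] (G : SimpleGraph V)
    (hdeg : ∀ v : V, G.degree v = 1 ∨ G.degree v = 3) {x a b : V}
    (h1 : G.Adj x a) (h2 : G.Adj x b) (hne : a ≠ b) : G.degree x = 3 := by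
  rcases hdeg x with h | h
  · exfalso
    have : 1 < G.degree x := by
      rw [SimpleGraph.degree]
      exact Finset.one_lt_card.2 ⟨a, by simpa using h1, b, by simpa using h2, hne⟩
    omega
  · exact h

lemma lemA {V : Type*} [Fintype V] (G : SimpleGraph V)
    (hdeg : ∀ v : V, G.degree v = 1 ∨ G.degree v = 3) (S : Set V) :
    ∀ {w u : V} (q : G.Walk w u), q.IsPath → w ∉ S → u ∈ S → G.degree w = 3 →
      ∃ x y : V, x ∈ S ∧ y ∉ S ∧ G.Adj x y ∧ G.degree y = 3 := by
  intro w u q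
  induction q with
  | nil => intro _ hw hu _; exact absurd hu hw
  | @cons w m u h q' ih =>
    intro hp hw hu hdw
    rw [SimpleGraph.Walk.cons_isPath_iff] at hp
    by_cases hm : m ∈ S
    · exact ⟨m, w, hm, hw, h.symm, hdw⟩
    · have hdm : G.degree m = 3 := by
        cases q' with
        | nil => exact absurd hu hm
        | cons h2 q'' =>
          refine deg3_of_two_nbrs G hdeg h.symm h2 ?_
          intro he
          exact hp.2 (by rw [he]; simp)
      exact ih hp.1 hm hu hdm

lemma lemB {V : Type*} [Fintype V] (G : SimpleGraph V) :
    ∀ {a b x : V} (p : G.Walk a b), x ∈ p.support → 1 ≤ p.length →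
      ∃ z ∈ p.support, G.Adj x z := by
  intro a b x p
  induction p with
  | nil => intro _ hl; simp at hl
  | @cons a c b h p' ih =>
    intro hx _
    rw [SimpleGraph.Walk.support_cons, List.mem_cons] at hx
    rcases hx with rfl | hx
    · exact ⟨c, by simp, h⟩
    · cases p' with
      | nil =>
        simp at hx
        subst hx
        exact ⟨a, by simp, h.symm⟩
      | cons h2 q'' =>
        obtain ⟨z, hz, hadj⟩ := ih hx (by simp)
        exact ⟨z, by simp at hz ⊢; tauto, hadj⟩

/-- If a unitrivalent tree is not simple, then there is a maximal-length path `p` and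
trivalent vertices `v₀` on `p` and `v₁` off `p` with `v₀` adjacent to `v₁`:
a trivalent vertex at distance 1 from a trivalent vertex contained in a maximal-length
chain of edges not containing it. -/
theorem not_simple_trivalent_off_maximal_path {V : Type*} [Fintype V]
    (G : SimpleGraph V) (hG : IsUnitrivalentTree G) (hns : ¬ IsSimpleUnitrivalent G) :
    ∃ (u v : V) (p : G.Walk u v), p.IsPath ∧
      (∀ (a b : V) (q : G.Walk a b), q.IsPath → q.length ≤ p.length) ∧
      ∃ v₀ v₁ : V, G.degree v₀ = 3 ∧ G.degree v₁ = 3 ∧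
        v₀ ∈ p.support ∧ v₁ ∉ p.support ∧ G.Adj v₀ v₁ := by
  obtain ⟨htree, hcard, hdeg⟩ := hG
  have hne : Nonempty V := Fintype.card_pos_iff.mp (by omega)
  obtain ⟨v0⟩ := hne
  -- maximal path
  set Sn : Finset ℕ := (Finset.range (Fintype.card V)).filter
    (fun k => ∃ (u v : V) (q : G.Walk u v), q.IsPath ∧ q.length = k) with hSn
  have h0 : (0 : ℕ) ∈ Sn := by
    simp only [hSn, Finset.mem_filter, Finset.mem_range]
    exact ⟨by omega, v0, v0, SimpleGraph.Walk.nil, SimpleGraph.Walk.IsPath.nil, rfl⟩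
  have hSne : Sn.Nonempty := ⟨0, h0⟩
  set m := Sn.max' hSne with hm
  have hmmem := Sn.max'_mem hSne
  simp only [hSn, Finset.mem_filter] at hmmem
  obtain ⟨-, u, v, p, hp, hplen⟩ := hmmem
  have hmax : ∀ (a b : V) (q : G.Walk a b), q.IsPath → q.length ≤ p.length := by
    intro a b q hq
    rw [hplen]
    apply Finset.le_max'
    simp only [hSn, Finset.mem_filter, Finset.mem_range]
    exact ⟨hq.length_lt, a, b, q, hq, rfl⟩
  refine ⟨u, v, p, hp, hmax, ?_⟩
  -- a trivalent vertex off p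
  unfold IsSimpleUnitrivalent at hns
  push_neg at hns
  obtain ⟨w, hw3, hwp⟩ := hns u v p hp
  -- walk from w to u
  have hreach : G.Reachable w u := htree.isConnected.preconnected w u
  obtain ⟨q, hq⟩ := (hreach.some.toPath : G.Path w u)
  have hu : u ∈ {x : V | x ∈ p.support} := p.start_mem_support
  obtain ⟨x, y, hxS, hyS, hadj, hy3⟩ :=
    lemA G hdeg {x : V | x ∈ p.support} q hq hwp hu hw3
  -- p has length ≥ 1
  have hplen1 : 1 ≤ p.length := by
    have hd := hdeg v0
    have hpos : 0 < G.degree v0 := by omega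
    rw [← SimpleGraph.card_neighborFinset_eq_degree, Finset.card_pos] at hpos
    obtain ⟨b, hb⟩ := hpos
    rw [SimpleGraph.mem_neighborFinset] at hb
    have : (SimpleGraph.Walk.cons hb SimpleGraph.Walk.nil).IsPath := by
      simp [SimpleGraph.Walk.cons_isPath_iff, hb.ne]
    have := hmax v0 b _ this
    simpa using this
  obtain ⟨z, hz, hxz⟩ := lemB G p hxS hplen1
  have hx3 : G.degree x = 3 := by
    refine deg3_of_two_nbrs G hdeg hadj hxz ?_
    intro he; exact hyS (he ▸ hz)
  exact ⟨x, y, hx3, hy3, hxS, hyS, hadj⟩
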